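/- If G is an almost bipartite graph with unique odd cycle C and G is not a König-Egerváry graph, then for every y ∈ V(C) the trace of Ω(G) on V(D_y − y) equals Ω(D_y − y), i.e., {S ∩ V(D_y − y) : S ∈ Ω(G)} = Ω(D_y − y). -/

import Mathlib

namespace AlmostBip

open SimpleGraph

variable {V : Type*}

/-- A set of vertices is independent if no two of its vertices are adjacent. -/
def IsIndepSet (G : SimpleGraph V) (s : Set V) : Prop :=
  s.Pairwise fun a b => ¬ G.Adj a b

/-- The independence number `α(G)`: the maximum size of an independent set. -/
noncomputable def alpha (G : SimpleGraph V) : ℕ :=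
  sSup {n | ∃ s : Set V, IsIndepSet G s ∧ s.ncard = n}

/-- `Ω(G)`: the family of all maximum independent sets. -/
def Omega (G : SimpleGraph V) : Set (Set V) :=
  {s | IsIndepSet G s ∧ s.ncard = alpha G}

/-- `core(G)`: the intersection of all maximum independent sets. -/
def core (G : SimpleGraph V) : Set V := ⋂₀ Omega G

/-- `corona(G)`: the union of all maximum independent sets. -/
def corona (G : SimpleGraph V) : Set V := ⋃₀ Omega G

/-- A matching: a set of edges of `G` that are pairwise non-incident. -/
def IsMatching (G : SimpleGraph V) (M : Set (Sym2 V)) : Prop :=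
  M ⊆ G.edgeSet ∧ M.Pairwise fun e f => ∀ x, x ∈ e → x ∉ f

/-- The matching number `μ(G)`: the maximum size of a matching. -/
noncomputable def mu (G : SimpleGraph V) : ℕ :=
  sSup {n | ∃ M : Set (Sym2 V), IsMatching G M ∧ M.ncard = n}

/-- A König-Egerváry graph: `α(G) + μ(G) = |V(G)|`. -/
def KonigEgervary (G : SimpleGraph V) : Prop :=
  alpha G + mu G = Nat.card V

/-- `N(A)`: the set of vertices having a neighbour in `A`. -/
def nbhd (G : SimpleGraph V) (A : Set V) : Set V :=
  {x | ∃ a ∈ A, G.Adj x a}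

/-- The difference `d_G(A) = |A| - |N(A)|`. -/
noncomputable def diffOf (G : SimpleGraph V) (A : Set V) : ℤ :=
  (A.ncard : ℤ) - ((nbhd G A).ncard : ℤ)

/-- The critical difference `d(G) = max {d_G(A) : A ⊆ V(G)}`. -/
noncomputable def critDiff (G : SimpleGraph V) : ℤ :=
  sSup {d | ∃ A : Set V, diffOf G A = d}

/-- A set is critical if its difference attains the critical difference. -/
def IsCriticalSet (G : SimpleGraph V) (A : Set V) : Prop :=
  diffOf G A = critDiff G

/-- `ker(G)`: the intersection of all critical independent sets. -/
def ker (G : SimpleGraph V) : Set V :=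
  ⋂₀ {A : Set V | IsCriticalSet G A ∧ IsIndepSet G A}

/-- A closed walk is an odd cycle if it is a cycle of odd length. -/
def IsOddCycle (G : SimpleGraph V) {v : V} (c : G.Walk v v) : Prop :=
  c.IsCycle ∧ Odd c.length

/-- `c` is the unique odd cycle of `G`: it is an odd cycle and any odd cycle
of `G` has the same edge set as `c`. -/
def UniqueOddCycle (G : SimpleGraph V) {v : V} (c : G.Walk v v) : Prop :=
  IsOddCycle G c ∧
    ∀ (u : V) (c' : G.Walk u u), IsOddCycle G c' →
      {e | e ∈ c'.edges} = {e | e ∈ c.edges}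

/-- `G` is almost bipartite if it has a unique odd cycle. -/
def AlmostBipartite (G : SimpleGraph V) : Prop :=
  ∃ (v : V) (c : G.Walk v v), UniqueOddCycle G c

/-- `V(C)`: the vertex set of a cycle given as a closed walk. -/
def cycleVerts {G : SimpleGraph V} {v : V} (c : G.Walk v v) : Set V :=
  {u | u ∈ c.support}

/-- `E(C)`: the edge set of a cycle given as a closed walk. -/
def cycleEdges {G : SimpleGraph V} {v : V} (c : G.Walk v v) : Set (Sym2 V) :=
  {e | e ∈ c.edges}

/-- `G - E(C)`: the graph `G` with the edges of the cycle deleted. -/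
def Gdel (G : SimpleGraph V) {v : V} (c : G.Walk v v) : SimpleGraph V :=
  G.deleteEdges (cycleEdges c)

/-- `V(D_y)`: the vertex set of the connected component of `G - E(C)`
containing `y`. -/
def Dset (G : SimpleGraph V) {v : V} (c : G.Walk v v) (y : V) : Set V :=
  {u | (Gdel G c).Reachable u y}

/-- `D_y`: the connected component of `G - E(C)` containing `y`,
as an induced subgraph. -/
def Dgraph (G : SimpleGraph V) {v : V} (c : G.Walk v v) (y : V) :
    SimpleGraph ↥(Dset G c y) :=
  SimpleGraph.induce (Dset G c y) (Gdel G c)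

/-- `D_y - y`: the component `D_y` with the vertex `y` deleted. -/
def DgraphMinus (G : SimpleGraph V) {v : V} (c : G.Walk v v) (y : V) :
    SimpleGraph ↥(Dset G c y \ {y}) :=
  SimpleGraph.induce (Dset G c y \ {y}) (Gdel G c)

/-- `N₁(C)`: the vertices off the cycle having a neighbour on the cycle. -/
def N1 (G : SimpleGraph V) {v : V} (c : G.Walk v v) : Set V :=
  {u | u ∉ cycleVerts c ∧ ∃ w ∈ cycleVerts c, G.Adj u w}

end AlmostBip

open AlmostBip

namespace AlmostBip

open SimpleGraph

variable {V : Type*}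

section Basics
variable [Finite V] {G : SimpleGraph V}

lemma alphaSet_bdd (G : SimpleGraph V) :
    BddAbove {n | ∃ s : Set V, IsIndepSet G s ∧ s.ncard = n} := by
  refine ⟨Nat.card V, ?_⟩
  rintro n ⟨s, -, rfl⟩
  calc s.ncard ≤ (Set.univ : Set V).ncard := Set.ncard_le_ncard (Set.subset_univ s) (Set.toFinite _)
    _ = Nat.card V := Set.ncard_univ V

lemma muSet_bdd (G : SimpleGraph V) :
    BddAbove {n | ∃ M : Set (Sym2 V), IsMatching G M ∧ M.ncard = n} := by
  refine ⟨Nat.card (Sym2 V), ?_⟩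
  rintro n ⟨M, -, rfl⟩
  have : Finite (Sym2 V) := by infer_instance
  calc M.ncard ≤ (Set.univ : Set (Sym2 V)).ncard := Set.ncard_le_ncard (Set.subset_univ M) (Set.toFinite _)
    _ = Nat.card (Sym2 V) := Set.ncard_univ _

lemma le_alpha {s : Set V} (hs : IsIndepSet G s) : s.ncard ≤ alpha G :=
  le_csSup (alphaSet_bdd G) ⟨s, hs, rfl⟩

lemma le_mu {M : Set (Sym2 V)} (hM : IsMatching G M) : M.ncard ≤ mu G :=
  le_csSup (muSet_bdd G) ⟨M, hM, rfl⟩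

lemma alpha_exists (G : SimpleGraph V) :
    ∃ s : Set V, IsIndepSet G s ∧ s.ncard = alpha G := by
  have h : alpha G ∈ {n | ∃ s : Set V, IsIndepSet G s ∧ s.ncard = n} :=
    Nat.sSup_mem ⟨0, ∅, by simp [IsIndepSet], by simp⟩ (alphaSet_bdd G)
  exact h

lemma mu_exists (G : SimpleGraph V) :
    ∃ M : Set (Sym2 V), IsMatching G M ∧ M.ncard = mu G := by
  have h : mu G ∈ {n | ∃ M : Set (Sym2 V), IsMatching G M ∧ M.ncard = n} :=
    Nat.sSup_mem ⟨0, ∅, ⟨by simp, by simp⟩, by simp⟩ (muSet_bdd G)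
  exact h

/-- α + μ ≤ n for any finite graph. -/
lemma alpha_add_mu_le (G : SimpleGraph V) : alpha G + mu G ≤ Nat.card V := by
  classical
  obtain ⟨s, hs, hsc⟩ := alpha_exists G
  obtain ⟨M, hM, hMc⟩ := mu_exists G
  -- for each edge in M pick an endpoint not in s
  have hpick : ∀ e ∈ M, ∃ x, x ∈ e ∧ x ∉ s := by
    intro e he
    have hedge : e ∈ G.edgeSet := hM.1 he
    induction e with
    | h a b =>
      rw [SimpleGraph.mem_edgeSet] at hedge
      by_cases ha : a ∈ s
      · by_cases hb : b ∈ s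
        · exact absurd hedge (hs ha hb (fun h => G.ne_of_adj hedge h))
        · exact ⟨b, by simp, hb⟩
      · exact ⟨a, by simp, ha⟩
  choose f hf1 hf2 using hpick
  have hcard : M.ncard ≤ (sᶜ : Set V).ncard := by
    have : Function.Injective (fun e : {e // e ∈ M} => (⟨f e e.2, hf2 e e.2⟩ : ↥(sᶜ))) := by
      rintro ⟨e, he⟩ ⟨e', he'⟩ h
      simp only [Subtype.mk.injEq] at h
      simp only [Subtype.mk.injEq] at h ⊢
      by_contra hne
      exact (hM.2 he he' hne) (f e he) (hf1 e he) (h ▸ hf1 e' he')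
    calc M.ncard = Nat.card {e // e ∈ M} := (Nat.card_coe_set_eq M).symm
    _ ≤ Nat.card ↥(sᶜ) := Nat.card_le_card_of_injective _ this
    _ = (sᶜ : Set V).ncard := Nat.card_coe_set_eq _
  have := Set.ncard_add_ncard_compl s (Set.toFinite s) (Set.toFinite sᶜ)
  omega

end Basics


section Extraction
variable {V : Type*} {G : SimpleGraph V}

lemma end_mem_tail_support {a b : V} (p : G.Walk a b) (hp : p.length ≠ 0) :
    b ∈ p.support.tail := by
  cases p with
  | nil => simp at hp
  | cons h q => simpa using q.end_mem_support

lemma closed_nodup_support_nil {x : V} (p : G.Walk x x) (hp : p.support.Nodup) :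
    p.length = 0 := by
  by_contra h
  have h1 := end_mem_tail_support p h
  rw [p.support_eq_cons] at hp
  exact (List.nodup_cons.mp hp).1 h1

lemma path_edge_start_end {x y : V} (q : G.Walk y x) (hq : q.support.Nodup)
    (he : s(x, y) ∈ q.edges) : q.length = 1 := by
  have hadjxy : G.Adj x y := q.edges_subset_edgeSet he
  cases q with
  | nil => simp at he
  | cons h' q' =>
    rw [SimpleGraph.Walk.edges_cons, List.mem_cons] at he
    rw [SimpleGraph.Walk.support_cons, List.nodup_cons] at hq
    rcases he with he | he
    · rw [Sym2.eq_iff] at he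
      rcases he with ⟨hxy, -⟩ | ⟨hxz, -⟩
      · -- x = y : but s(x,y) is an edge so x ≠ y
        exact absurd hxy hadjxy.ne
      · -- q' : Walk x x with nodup support
        subst hxz
        have := closed_nodup_support_nil q' hq.2
        simp [this]
    · exact absurd (SimpleGraph.Walk.snd_mem_support_of_mem_edges q' he) hq.1

/-- Any closed walk of odd length contains an odd cycle among its edges. -/
lemma exists_odd_cycle (n : ℕ) : ∀ {u : V} (p : G.Walk u u), p.length = n → Odd n →
    ∃ (x : V) (q : G.Walk x x), q.IsCycle ∧ Odd q.length ∧ ∀ e ∈ q.edges, e ∈ p.edges := by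
  classical
  induction n using Nat.strong_induction_on with
  | _ n ih =>
  intro u p hn hodd
  by_cases htail : p.support.tail.Nodup
  · -- p itself is a cycle
    cases p with
    | nil =>
      exfalso
      simp only [SimpleGraph.Walk.length_nil] at hn
      rw [← hn] at hodd
      exact (by decide : ¬ Odd 0) hodd
    | cons h q =>
      rename_i y
      rw [SimpleGraph.Walk.support_cons] at htail
      simp only [List.tail_cons] at htail
      have hpath : q.IsPath := (SimpleGraph.Walk.isPath_def q).mpr htail
      have hne : s(u, y) ∉ q.edges := by
        intro hmem
        have := path_edge_start_end q htail hmem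
        rw [SimpleGraph.Walk.length_cons, this] at hn
        subst hn
        exact (by decide : ¬ Odd 2) hodd
      refine ⟨u, Walk.cons h q, (SimpleGraph.Walk.cons_isCycle_iff q h).mpr ⟨hpath, hne⟩,
        hn ▸ hodd, fun e he => he⟩
  · -- a repeated vertex: rotate and split
    obtain ⟨x, hdup⟩ := List.exists_duplicate_iff_not_nodup.mpr htail
    have hcount : 2 ≤ p.support.tail.count x := List.duplicate_iff_two_le_count.mp hdup
    have hxp : x ∈ p.support := by
      rw [p.support_eq_cons]
      exact List.mem_cons_of_mem _ (List.duplicate_iff_two_le_count.mpr hcount).mem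
    set rp := p.rotate x hxp with hrp
    have hlenrot : rp.length = n := by
      have h1 := (p.rotate_edges x hxp).perm.length_eq
      rwa [SimpleGraph.Walk.length_edges, SimpleGraph.Walk.length_edges, hn] at h1
    have hedgesub : ∀ e ∈ rp.edges, e ∈ p.edges := fun e he =>
      (p.rotate_edges x hxp).perm.mem_iff.mp he
    have hcount' : 2 ≤ rp.support.tail.count x := by
      rwa [(p.support_rotate x hxp).perm.count_eq]
    cases hrpc : rp with
    | nil =>
      exfalso
      rw [hrpc] at hlenrot
      simp only [SimpleGraph.Walk.length_nil] at hlenrot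
      rw [← hlenrot] at hodd
      exact (by decide : ¬ Odd 0) hodd
    | cons hadj w =>
      -- w : Walk y₂ x ; x ∈ w.support with multiplicity ≥ 2 in rp.support.tail = w.support
      rw [hrpc] at hcount'
      rw [SimpleGraph.Walk.support_cons] at hcount'
      simp only [List.tail_cons] at hcount'
      have hxw : x ∈ w.support := (List.duplicate_iff_two_le_count.mpr hcount').mem
      set t := w.takeUntil x hxw with ht
      set d := w.dropUntil x hxw with hd
      have hspec : t.append d = w := w.take_spec hxw
      have hlensum : t.length + d.length = w.length := by
        rw [← SimpleGraph.Walk.length_append, hspec]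
      have hwlen : w.length + 1 = n := by
        have : rp.length = n := hlenrot
        rw [hrpc] at this
        simpa [SimpleGraph.Walk.length_cons] using this
      -- d has length ≥ 1
      have hdpos : d.length ≠ 0 := by
        intro h0
        have hcnt1 : t.support.count x = 1 := w.count_support_takeUntil_eq_one hxw
        have : w.support.count x = t.support.count x + d.support.tail.count x := by
          rw [← hspec, SimpleGraph.Walk.support_append, List.count_append]
        have hdt : d.support.tail = [] := by
          have := SimpleGraph.Walk.length_support d
          rw [h0] at this
          cases hds : d.support with
          | nil => simp [hds] at this
          | cons a l => rw [hds] at this; simp at this; simp [this]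
        rw [hdt] at this
        simp [hcnt1] at this
        omega
      have hq1len : (1 + t.length) + d.length = n := by
        rw [← hwlen] at *
        omega
      -- one of the two closed walks has odd length
      have hone : Odd (1 + t.length) ∨ Odd d.length := by
        rcases Nat.even_or_odd d.length with he | ho
        · left
          rcases Nat.even_or_odd (1 + t.length) with he2 | ho2
          · exfalso
            have : Even n := by rw [← hq1len]; exact he2.add he
            exact (Nat.not_even_iff_odd.mpr hodd) this
          · exact ho2
        · right; exact ho
      rcases hone with hodd1 | hodd2
      · -- recurse on cons hadj t : Walk x x
        have hlt : 1 + t.length < n := by omega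
        obtain ⟨z, q, hq1, hq2, hq3⟩ := ih (1 + t.length) hlt (Walk.cons hadj t)
          (by simp [SimpleGraph.Walk.length_cons]; omega) hodd1
        refine ⟨z, q, hq1, hq2, fun e he => ?_⟩
        have := hq3 e he
        rw [SimpleGraph.Walk.edges_cons, List.mem_cons] at this
        apply hedgesub
        rw [hrpc, SimpleGraph.Walk.edges_cons, List.mem_cons]
        rcases this with h1 | h1
        · left; exact h1
        · right; exact SimpleGraph.Walk.edges_takeUntil_subset w hxw h1
      · -- recurse on d : Walk x x
        have hlt : d.length < n := by omega
        obtain ⟨z, q, hq1, hq2, hq3⟩ := ih d.length hlt d rfl hodd2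
        refine ⟨z, q, hq1, hq2, fun e he => ?_⟩
        apply hedgesub
        rw [hrpc, SimpleGraph.Walk.edges_cons, List.mem_cons]
        right
        exact SimpleGraph.Walk.edges_dropUntil_subset w hxw (hq3 e he)


end Extraction

section Konig
/-- König–Egerváry-type bound for graphs with no odd closed walk. -/
theorem card_le_alpha_add_mu {W : Type*} [Finite W] (Γ : SimpleGraph W)
    (hno : ∀ (u : W) (p : Γ.Walk u u), ¬ Odd p.length) :
    Nat.card W ≤ alpha Γ + mu Γ := by
  classical
  cases nonempty_fintype W
  letI : DecidableRel Γ.Adj := Classical.decRel _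
  -- the bipartition
  have hreach : ∀ w : W, Γ.Reachable w (Γ.connectedComponentMk w).out := by
    intro w
    exact ConnectedComponent.eq.mp ((Γ.connectedComponentMk w).out_eq).symm
  let wk : ∀ w : W, Γ.Walk w (Γ.connectedComponentMk w).out := fun w => (hreach w).some
  have hkey : ∀ a b : W, Γ.Adj a b → (Even (wk a).length ↔ ¬ Even (wk b).length) := by
    intro a b hab
    have hcomp : Γ.connectedComponentMk a = Γ.connectedComponentMk b :=
      ConnectedComponent.sound hab.reachable
    have hroot : (Γ.connectedComponentMk a).out = (Γ.connectedComponentMk b).out := by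
      rw [hcomp]
    let w2' : Γ.Walk b (Γ.connectedComponentMk a).out := (wk b).copy rfl hroot.symm
    have hlen2 : w2'.length = (wk b).length := SimpleGraph.Walk.length_copy _ _ _
    have hclosed := hno a ((SimpleGraph.Walk.cons hab (w2'.append (wk a).reverse)))
    rw [SimpleGraph.Walk.length_cons, SimpleGraph.Walk.length_append,
      SimpleGraph.Walk.length_reverse, hlen2] at hclosed
    rw [Nat.not_odd_iff_even, Nat.even_iff] at hclosed
    rw [Nat.even_iff, Nat.not_even_iff]
    omega
  let X : Finset W := Finset.univ.filter (fun w => Even (wk w).length)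
  have hX : ∀ a b : W, Γ.Adj a b → (a ∈ X ↔ b ∉ X) := by
    intro a b hab
    simp only [X, Finset.mem_filter, Finset.mem_univ, true_and]
    exact (hkey a b hab).trans (by tauto)
  -- neighborhoods and deficiency
  let nb : Finset W → Finset W := fun A => A.biUnion (fun a => Γ.neighborFinset a)
  have hnbY : ∀ A : Finset W, A ⊆ X → ∀ w ∈ nb A, w ∉ X := by
    intro A hA w hw
    simp only [nb, Finset.mem_biUnion] at hw
    obtain ⟨a, haA, hwa⟩ := hw
    rw [SimpleGraph.mem_neighborFinset] at hwa
    exact (hX a w hwa).mp (hA haA)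
  let d : ℕ := X.powerset.sup (fun A => A.card - (nb A).card)
  -- the independent set of size Xᶜ.card + d
  have halpha : Xᶜ.card + d ≤ alpha Γ := by
    obtain ⟨A0, hA0mem, hA0⟩ := Finset.exists_mem_eq_sup X.powerset ⟨∅, by simp⟩
      (fun A => A.card - (nb A).card)
    rw [Finset.mem_powerset] at hA0mem
    by_cases hd : d = 0
    · -- use Xᶜ itself
      have : IsIndepSet Γ (↑(Xᶜ) : Set W) := by
        intro a ha b hb hne hadj
        simp only [Finset.coe_compl, Set.mem_compl_iff, Finset.mem_coe] at ha hb
        exact ha ((hX a b hadj).mpr hb)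
      calc Xᶜ.card + d = (↑(Xᶜ) : Set W).ncard := by rw [hd, Set.ncard_coe_finset]; ring
        _ ≤ alpha Γ := le_alpha this
    · -- use A0 ∪ (Xᶜ \ nb A0)
      have hdpos : 0 < A0.card - (nb A0).card := by
        have hd' : A0.card - (nb A0).card ≠ 0 := by rw [← hA0]; exact hd
        omega
      -- the independent set A0 ∪ (Xᶜ \ nb A0)
      have hnbsub : nb A0 ⊆ Xᶜ := by
        intro w hw
        rw [Finset.mem_compl]
        exact hnbY A0 hA0mem w hw
      have hdisj : Disjoint A0 (Xᶜ \ nb A0) := by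
        refine Finset.disjoint_left.mpr (fun a ha hmem => ?_)
        rw [Finset.mem_sdiff, Finset.mem_compl] at hmem
        exact hmem.1 (hA0mem ha)
      have hindep : IsIndepSet Γ (↑(A0 ∪ (Xᶜ \ nb A0)) : Set W) := by
        intro a ha b hb hne hadj
        simp only [Finset.coe_union, Set.mem_union, Finset.coe_sdiff, Finset.coe_compl,
          Set.mem_diff, Set.mem_compl_iff, Finset.mem_coe] at ha hb
        rcases ha with ha | ⟨ha1, ha2⟩ <;> rcases hb with hb | ⟨hb1, hb2⟩
        · exact ((hX a b hadj).mp (hA0mem ha)) (hA0mem hb)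
        · exact hb2 (by simp only [nb, Finset.mem_biUnion]; exact ⟨a, ha, by rwa [SimpleGraph.mem_neighborFinset]⟩)
        · exact ha2 (by simp only [nb, Finset.mem_biUnion]; exact ⟨b, hb, by rwa [SimpleGraph.mem_neighborFinset, adj_comm]⟩)
        · exact ha1 ((hX a b hadj).mpr hb1)
      have hcard : (A0 ∪ (Xᶜ \ nb A0)).card = A0.card + Xᶜ.card - (nb A0).card := by
        rw [Finset.card_union_of_disjoint hdisj, Finset.card_sdiff_of_subset hnbsub]
        have := Finset.card_le_card hnbsub
        omega
      have := le_alpha hindep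
      rw [Set.ncard_coe_finset, hcard] at this
      have hle : Xᶜ.card + d ≤ A0.card + Xᶜ.card - (nb A0).card := by
        have hdval : d = A0.card - (nb A0).card := hA0
        have := Finset.card_le_card hnbsub
        omega
      omega
  -- the matching of size ≥ X.card - d via Hall's theorem
  have hmu : X.card ≤ mu Γ + d := by
    have hall : ∀ s : Finset {x // x ∈ X},
        s.card ≤ (s.biUnion (fun x => ((Γ.neighborFinset ↑x).image Sum.inl ∪
          (Finset.univ : Finset (Fin d)).image Sum.inr : Finset (W ⊕ Fin d)))).card := by
      intro s
      rcases s.eq_empty_or_nonempty with rfl | hs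
      · simp
      · set s' : Finset W := s.image Subtype.val with hs'
        have hscard : s.card = s'.card := (Finset.card_image_of_injective s Subtype.val_injective).symm
        have hsub : ((nb s').image Sum.inl ∪ (Finset.univ : Finset (Fin d)).image Sum.inr : Finset (W ⊕ Fin d)) ⊆
            s.biUnion (fun x => ((Γ.neighborFinset ↑x).image Sum.inl ∪
              (Finset.univ : Finset (Fin d)).image Sum.inr)) := by
          intro e he
          rw [Finset.mem_union] at he
          rcases he with he | he
          · rw [Finset.mem_image] at he
            obtain ⟨w, hw, rfl⟩ := he
            simp only [nb, Finset.mem_biUnion] at hw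
            obtain ⟨a, has', hwa⟩ := hw
            rw [hs', Finset.mem_image] at has'
            obtain ⟨x, hxs, rfl⟩ := has'
            rw [Finset.mem_biUnion]
            exact ⟨x, hxs, Finset.mem_union_left _ (Finset.mem_image_of_mem _ hwa)⟩
          · obtain ⟨x, hxs⟩ := hs
            rw [Finset.mem_biUnion]
            exact ⟨x, hxs, Finset.mem_union_right _ he⟩
        have hdisj2 : Disjoint ((nb s').image Sum.inl : Finset (W ⊕ Fin d))
            ((Finset.univ : Finset (Fin d)).image Sum.inr) := by
          refine Finset.disjoint_left.mpr (fun e he1 he2 => ?_)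
          rw [Finset.mem_image] at he1 he2
          obtain ⟨w, -, rfl⟩ := he1
          obtain ⟨j, -, hj⟩ := he2
          exact Sum.inl_ne_inr hj.symm
        have hcard2 := Finset.card_le_card hsub
        rw [Finset.card_union_of_disjoint hdisj2, Finset.card_image_of_injective _ Sum.inl_injective,
          Finset.card_image_of_injective _ Sum.inr_injective, Finset.card_univ, Fintype.card_fin] at hcard2
        have hdef : s'.card - (nb s').card ≤ d := by
          refine Finset.le_sup (f := fun A => A.card - (nb A).card) ?_
          rw [Finset.mem_powerset, hs']
          intro w hw
          rw [Finset.mem_image] at hw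
          obtain ⟨x, -, rfl⟩ := hw
          exact x.2
        omega
    obtain ⟨f, hfinj, hfmem⟩ :=
      (Finset.all_card_le_biUnion_card_iff_existsInjective'
        (fun x : {x // x ∈ X} => ((Γ.neighborFinset ↑x).image Sum.inl ∪
          (Finset.univ : Finset (Fin d)).image Sum.inr : Finset (W ⊕ Fin d)))).mp hall
    -- the matched vertices
    let I1 : Finset {x // x ∈ X} := Finset.univ.filter (fun x => ∃ w : W, f x = Sum.inl w)
    have hfadj : ∀ (x : {x // x ∈ X}) (w : W), f x = Sum.inl w → Γ.Adj ↑x w := by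
      intro x w hfx
      have := hfmem x
      rw [hfx, Finset.mem_union] at this
      rcases this with h | h
      · rw [Finset.mem_image] at h
        obtain ⟨w', hw', hww⟩ := h
        rw [Sum.inl.injEq] at hww
        subst hww
        rwa [SimpleGraph.mem_neighborFinset] at hw'
      · rw [Finset.mem_image] at h
        obtain ⟨j, -, hj⟩ := h
        exact absurd hj (Sum.inr_ne_inl)
    -- build the matching
    choose g hg using fun (x : {x : {x // x ∈ X} // x ∈ I1}) => by
      have := x.1.2
      exact (Finset.mem_filter.mp x.2).2
    let emap : {x : {x // x ∈ X} // x ∈ I1} → Sym2 W := fun x => s(↑↑x, g x)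
    have hadjg : ∀ x, Γ.Adj ↑↑x (g x) := fun x => hfadj _ _ (hg x)
    have hgY : ∀ x, g x ∉ X := fun x => (hX _ _ (hadjg x)).mp (↑x : {x // x ∈ X}).2
    have hginj : ∀ x y, g x = g y → x = y := by
      intro x y hxy
      have : f ↑x = f ↑y := by rw [hg x, hg y, hxy]
      exact Subtype.ext (hfinj this)
    have hMmatch : IsMatching Γ (Set.range emap) := by
      constructor
      · rintro e ⟨x, rfl⟩
        exact (hadjg x)
      · rintro e ⟨x, rfl⟩ e' ⟨x', rfl⟩ hne z hz hz'
        simp only [emap, Sym2.mem_iff] at hz hz'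
        have hxx' : x ≠ x' := fun h => hne (by rw [h])
        rcases hz with rfl | rfl <;> rcases hz' with h | h
        · exact hxx' (Subtype.ext (Subtype.ext h))
        · exact (hgY x') (h ▸ (↑x : {x // x ∈ X}).2)
        · exact (hgY x) (h ▸ (↑x' : {x // x ∈ X}).2)
        · exact hxx' (hginj _ _ h)
    have hMcard : (Set.range emap).ncard = I1.card := by
      have hinj : Function.Injective emap := by
        intro x y hxy
        simp only [emap, Sym2.eq_iff] at hxy
        rcases hxy with ⟨h1, h2⟩ | ⟨h1, h2⟩
        · exact Subtype.ext (Subtype.ext h1)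
        · exfalso; exact (hgY y) (h1 ▸ (↑x : {x // x ∈ X}).2)
      rw [← Set.image_univ, Set.ncard_image_of_injective _ hinj, Set.ncard_univ,
        Nat.card_eq_fintype_card, Fintype.card_coe]
    have hI1card : X.card ≤ I1.card + d := by
      -- complement of I1 injects into Fin d
      classical
      have : ∀ x : {x // x ∈ X}, x ∉ I1 → ∃ j : Fin d, f x = Sum.inr j := by
        intro x hx
        simp only [I1, Finset.mem_filter, Finset.mem_univ, true_and] at hx
        cases hfx : f x with
        | inl w => exact absurd ⟨w, hfx⟩ hx
        | inr j => exact ⟨j, rfl⟩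
      choose h hhj using this
      have hcardle : Nat.card {x : {x // x ∈ X} // x ∉ I1} ≤ d := by
        have hinj3 : Function.Injective (fun x : {x : {x // x ∈ X} // x ∉ I1} => h ↑x x.2) := by
          intro a b hab
          simp only at hab
          have : f ↑a = f ↑b := by rw [hhj ↑a a.2, hhj ↑b b.2, hab]
          exact Subtype.ext (hfinj this)
        have := Nat.card_le_card_of_injective _ hinj3
        simpa using this
      have h1 : Nat.card {x : {x // x ∈ X} // x ∉ I1} = (I1ᶜ : Finset _).card := by
        rw [Nat.card_eq_fintype_card]
        rw [← Fintype.card_coe]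
        apply Fintype.card_congr
        exact Equiv.subtypeEquivRight (fun x => (Finset.mem_compl).symm)
      have h2 : I1.card + (I1ᶜ : Finset _).card = X.card := by
        rw [Finset.card_add_card_compl, Fintype.card_coe]
      omega
    have := le_mu hMmatch
    omega
  have htot := Finset.card_add_card_compl X
  rw [Nat.card_eq_fintype_card]
  omega


end Konig

section Structure
variable {G : SimpleGraph V} {v : V} {c : G.Walk v v}

lemma end_mem_tail_support' {a b : V} (p : G.Walk a b) (hp : p.length ≠ 0) :
    b ∈ p.support.tail := by
  cases p with
  | nil => simp at hp
  | cons h q => simpa using q.end_mem_support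

lemma edges_mapLe {G' : SimpleGraph V} (h : G ≤ G') {a b : V} (p : G.Walk a b) :
    (p.mapLe h).edges = p.edges := by
  unfold SimpleGraph.Walk.mapLe
  rw [SimpleGraph.Walk.edges_map]
  have : Sym2.map ⇑(SimpleGraph.Hom.ofLE h) = id := by
    ext e
    induction e with
    | h x y => rfl
  rw [this, List.map_id]

lemma support_mapLe {G' : SimpleGraph V} (h : G ≤ G') {a b : V} (p : G.Walk a b) :
    (p.mapLe h).support = p.support := by
  unfold SimpleGraph.Walk.mapLe
  rw [SimpleGraph.Walk.support_map]
  have : ⇑(SimpleGraph.Hom.ofLE h) = id := rfl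
  rw [this, List.map_id]

lemma mem_tail_of_mem_closed {z : V} (p : G.Walk v v) (hlen : p.length ≠ 0)
    (hz : z ∈ p.support) : z ∈ p.support.tail := by
  rcases eq_or_ne z v with rfl | hne
  · exact end_mem_tail_support' p hlen
  · rw [p.support_eq_cons, List.mem_cons] at hz
    exact hz.resolve_left hne

lemma exists_edge_at (hC : Odd c.length) {z : V} (hz : z ∈ cycleVerts c) :
    ∃ w, s(z, w) ∈ c.edges := by
  classical
  have hz' : z ∈ c.support := hz
  have hlen : (c.rotate z hz').length = c.length := by
    have h1 := (c.rotate_edges z hz').perm.length_eq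
    rwa [SimpleGraph.Walk.length_edges, SimpleGraph.Walk.length_edges] at h1
  have hne : c.length ≠ 0 := by rintro h; rw [h] at hC; exact (by decide : ¬ Odd 0) hC
  cases hrc : c.rotate z hz' with
  | nil => rw [hrc] at hlen; simp at hlen; exact absurd hlen.symm hne
  | cons hadj w0 =>
    rename_i y0
    refine ⟨y0, ?_⟩
    have h2 : s(z, y0) ∈ (c.rotate z hz').edges := by
      rw [hrc, SimpleGraph.Walk.edges_cons]; exact List.mem_cons_self
    exact (c.rotate_edges z hz').perm.mem_iff.mp h2

lemma gdel_edges_not_cycle {a b : V} (p : (Gdel G c).Walk a b) :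
    ∀ e ∈ p.edges, e ∉ cycleEdges c := by
  intro e he
  have := p.edges_subset_edgeSet he
  rw [Gdel, SimpleGraph.edgeSet_deleteEdges] at this
  exact this.2

/-- Distinct vertices of the unique odd cycle lie in distinct components of `G - E(C)`. -/
lemma cycle_sep (huniq : UniqueOddCycle G c) {w z : V} (hw : w ∈ cycleVerts c)
    (hz : z ∈ cycleVerts c) (hreach : (Gdel G c).Reachable w z) : w = z := by
  classical
  by_contra hne
  obtain ⟨p⟩ := hreach
  set p' : G.Walk w z := p.mapLe (SimpleGraph.deleteEdges_le _) with hp'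
  have hp'edges : ∀ e ∈ p'.edges, e ∉ cycleEdges c := by
    intro e he
    exact gdel_edges_not_cycle p e (by rw [← edges_mapLe (G := Gdel G c) (SimpleGraph.deleteEdges_le _) p]; exact he)
  -- rotate the cycle at w
  have hw' : w ∈ c.support := hw
  set c' := c.rotate w hw' with hc'
  have hlenc' : c'.length = c.length := by
    have h1 := (c.rotate_edges w hw').perm.length_eq
    rwa [SimpleGraph.Walk.length_edges, SimpleGraph.Walk.length_edges] at h1
  have hCodd := huniq.1.2
  have hlenne : c.length ≠ 0 := by
    rintro h; rw [h] at hCodd; exact (by decide : ¬ Odd 0) hCodd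
  have hzc' : z ∈ c'.support := by
    have h1 : z ∈ c.support.tail := mem_tail_of_mem_closed c hlenne hz
    have h2 : z ∈ c'.support.tail := (c.support_rotate w hw').perm.mem_iff.mpr h1
    rw [c'.support_eq_cons]
    exact List.mem_cons_of_mem _ h2
  set t := c'.takeUntil z hzc' with htdef
  set dd := c'.dropUntil z hzc' with hddef
  have hspec : t.append dd = c' := c'.take_spec hzc'
  have hsum : t.length + dd.length = c'.length := by
    rw [← SimpleGraph.Walk.length_append, hspec]
  have htpos : t.length ≠ 0 := fun h0 => hne (SimpleGraph.Walk.eq_of_length_eq_zero h0)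
  have hdpos : dd.length ≠ 0 := fun h0 => hne (SimpleGraph.Walk.eq_of_length_eq_zero h0).symm
  -- edge decomposition of c'
  have hedgesc' : t.edges ++ dd.edges = c'.edges := by
    rw [← SimpleGraph.Walk.edges_append, hspec]
  have hnodupc' : c'.edges.Nodup := by
    exact (c.rotate_edges w hw').perm.nodup_iff.mpr huniq.1.1.edges_nodup
  have hdisjtd : ∀ e ∈ t.edges, e ∉ dd.edges := by
    intro e het hed
    rw [← hedgesc'] at hnodupc'
    exact (List.disjoint_of_nodup_append hnodupc') het hed
  -- one of the two closed walks is odd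
  have hone : Odd (p'.length + dd.length) ∨ Odd (p'.length + t.length) := by
    have : t.length + dd.length = c.length := by rw [hsum, hlenc']
    rcases Nat.even_or_odd (p'.length + dd.length) with he | ho
    · right
      rw [Nat.odd_iff]; rw [Nat.even_iff] at he
      rw [Nat.odd_iff] at hCodd
      omega
    · left; exact ho
  -- helper to finish given an odd closed walk
  have finish : ∀ (q0 : G.Walk w w), (∀ e ∈ q0.edges, e ∈ p'.edges ∨ (e ∈ t.edges ∧ True) ∨ e ∈ dd.edges) → True := fun _ _ => trivial
  rcases hone with hodd1 | hodd2
  · -- closed walk p' ++ dd.reverse? No: p' : w→z, dd : z→w, so p'.append dd : w → w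
    obtain ⟨x, q, hq1, hq2, hq3⟩ := exists_odd_cycle (p'.length + dd.length)
      (p'.append dd) (SimpleGraph.Walk.length_append _ _) hodd1
    have hqedges : {e | e ∈ q.edges} = {e | e ∈ c.edges} := huniq.2 x q ⟨hq1, hq2⟩
    -- pick an edge of t (nonempty), it is in c.edges hence in q.edges,
    -- hence in p'.edges ++ dd.edges : contradiction
    have htne : t.edges ≠ [] := by
      intro h
      have := SimpleGraph.Walk.length_edges t
      rw [h] at this
      exact htpos (by simpa using this.symm)
    obtain ⟨e, he⟩ := List.exists_mem_of_ne_nil _ htne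
    have hec : e ∈ c.edges := by
      have h1 : e ∈ c'.edges := by rw [← hedgesc']; exact List.mem_append_left _ he
      exact (c.rotate_edges w hw').perm.mem_iff.mp h1
    have heq : e ∈ q.edges := by
      have : e ∈ {e | e ∈ c.edges} := hec
      rw [← hqedges] at this
      exact this
    have := hq3 e heq
    rw [SimpleGraph.Walk.edges_append, List.mem_append] at this
    rcases this with h1 | h1
    · exact (hp'edges e h1) hec
    · exact (hdisjtd e he) h1
  · -- closed walk p'.append t.reverse : w → w  (t : w → z)
    obtain ⟨x, q, hq1, hq2, hq3⟩ := exists_odd_cycle (p'.length + t.length)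
      (p'.append t.reverse)
      (by rw [SimpleGraph.Walk.length_append, SimpleGraph.Walk.length_reverse]) hodd2
    have hqedges : {e | e ∈ q.edges} = {e | e ∈ c.edges} := huniq.2 x q ⟨hq1, hq2⟩
    have hdne : dd.edges ≠ [] := by
      intro h
      have := SimpleGraph.Walk.length_edges dd
      rw [h] at this
      exact hdpos (by simpa using this.symm)
    obtain ⟨e, he⟩ := List.exists_mem_of_ne_nil _ hdne
    have hec : e ∈ c.edges := by
      have h1 : e ∈ c'.edges := by rw [← hedgesc']; exact List.mem_append_right _ he
      exact (c.rotate_edges w hw').perm.mem_iff.mp h1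
    have heq : e ∈ q.edges := by
      have : e ∈ {e | e ∈ c.edges} := hec
      rw [← hqedges] at this
      exact this
    have := hq3 e heq
    rw [SimpleGraph.Walk.edges_append, List.mem_append, SimpleGraph.Walk.edges_reverse,
      List.mem_reverse] at this
    rcases this with h1 | h1
    · exact (hp'edges e h1) hec
    · exact (hdisjtd e h1) he

/-- Every odd closed walk of `G` visits every vertex of the unique odd cycle. -/
lemma odd_walk_visits (huniq : UniqueOddCycle G c) {u : V} (p : G.Walk u u)
    (hodd : Odd p.length) {z : V} (hz : z ∈ cycleVerts c) : z ∈ p.support := by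
  obtain ⟨x, q, hq1, hq2, hq3⟩ := exists_odd_cycle p.length p rfl hodd
  have hqedges : {e | e ∈ q.edges} = {e | e ∈ c.edges} := huniq.2 x q ⟨hq1, hq2⟩
  obtain ⟨w, hw⟩ := exists_edge_at huniq.1.2 hz
  have : s(z, w) ∈ q.edges := by
    have h1 : s(z, w) ∈ {e | e ∈ c.edges} := hw
    rw [← hqedges] at h1
    exact h1
  exact SimpleGraph.Walk.fst_mem_support_of_mem_edges p (hq3 _ this)

/-- No odd closed walks in an induced subgraph missing a vertex of the cycle. -/
lemma no_odd_walk_induce (huniq : UniqueOddCycle G c) {B : Set V} {z : V}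
    (hzc : z ∈ cycleVerts c) (hzB : z ∉ B) :
    ∀ (u : ↥B) (p : (SimpleGraph.induce B G).Walk u u), ¬ Odd p.length := by
  intro u p hodd
  let f : (SimpleGraph.induce B G) →g G := ⟨Subtype.val, fun {a b} h => h⟩
  have hlen : (p.map f).length = p.length := SimpleGraph.Walk.length_map f p
  have hmem := odd_walk_visits huniq (p.map f) (hlen ▸ hodd) hzc
  rw [SimpleGraph.Walk.support_map] at hmem
  obtain ⟨x, -, hx⟩ := List.mem_map.mp hmem
  exact hzB (hx ▸ x.2)

/-- Also for induced subgraphs of `Gdel`. -/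
lemma no_odd_walk_induce_gdel (huniq : UniqueOddCycle G c) {B : Set V} {z : V}
    (hzc : z ∈ cycleVerts c) (hzB : z ∉ B) :
    ∀ (u : ↥B) (p : (SimpleGraph.induce B (Gdel G c)).Walk u u), ¬ Odd p.length := by
  intro u p hodd
  have hle : SimpleGraph.induce B (Gdel G c) ≤ SimpleGraph.induce B G := by
    intro a b hab
    exact SimpleGraph.deleteEdges_le (G := G) (cycleEdges c) hab
  have := no_odd_walk_induce huniq hzc hzB u (p.mapLe hle)
  rw [SimpleGraph.Walk.length_map] at this
  exact this hodd

end Structure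

section OnSets
variable [Finite V]

noncomputable def alphaOn (G : SimpleGraph V) (B : Set V) : ℕ :=
  sSup {n | ∃ s : Set V, s ⊆ B ∧ IsIndepSet G s ∧ s.ncard = n}

noncomputable def muOn (G : SimpleGraph V) (B : Set V) : ℕ :=
  sSup {n | ∃ M : Set (Sym2 V), IsMatching G M ∧ (∀ e ∈ M, ∀ x ∈ e, x ∈ B) ∧ M.ncard = n}

variable {G : SimpleGraph V} {B B1 B2 : Set V}

lemma alphaOnSet_bdd (G : SimpleGraph V) (B : Set V) :
    BddAbove {n | ∃ s : Set V, s ⊆ B ∧ IsIndepSet G s ∧ s.ncard = n} := by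
  refine ⟨Nat.card V, ?_⟩
  rintro n ⟨s, -, -, rfl⟩
  calc s.ncard ≤ (Set.univ : Set V).ncard :=
        Set.ncard_le_ncard (Set.subset_univ s) (Set.toFinite _)
    _ = Nat.card V := Set.ncard_univ V

lemma muOnSet_bdd (G : SimpleGraph V) (B : Set V) :
    BddAbove {n | ∃ M : Set (Sym2 V), IsMatching G M ∧ (∀ e ∈ M, ∀ x ∈ e, x ∈ B) ∧ M.ncard = n} := by
  refine ⟨Nat.card (Sym2 V), ?_⟩
  rintro n ⟨M, -, -, rfl⟩
  calc M.ncard ≤ (Set.univ : Set (Sym2 V)).ncard :=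
        Set.ncard_le_ncard (Set.subset_univ M) (Set.toFinite _)
    _ = Nat.card (Sym2 V) := Set.ncard_univ _

lemma le_alphaOn {s : Set V} (hsB : s ⊆ B) (hs : IsIndepSet G s) : s.ncard ≤ alphaOn G B :=
  le_csSup (alphaOnSet_bdd G B) ⟨s, hsB, hs, rfl⟩

lemma le_muOn {M : Set (Sym2 V)} (hM : IsMatching G M) (hMB : ∀ e ∈ M, ∀ x ∈ e, x ∈ B) :
    M.ncard ≤ muOn G B :=
  le_csSup (muOnSet_bdd G B) ⟨M, hM, hMB, rfl⟩

lemma alphaOn_exists (G : SimpleGraph V) (B : Set V) :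
    ∃ s : Set V, s ⊆ B ∧ IsIndepSet G s ∧ s.ncard = alphaOn G B := by
  have h : alphaOn G B ∈ {n | ∃ s : Set V, s ⊆ B ∧ IsIndepSet G s ∧ s.ncard = n} :=
    Nat.sSup_mem ⟨0, ∅, by simp, by simp [IsIndepSet], by simp⟩ (alphaOnSet_bdd G B)
  exact h

lemma muOn_exists (G : SimpleGraph V) (B : Set V) :
    ∃ M : Set (Sym2 V), IsMatching G M ∧ (∀ e ∈ M, ∀ x ∈ e, x ∈ B) ∧ M.ncard = muOn G B := by
  have h : muOn G B ∈ {n | ∃ M : Set (Sym2 V), IsMatching G M ∧ (∀ e ∈ M, ∀ x ∈ e, x ∈ B) ∧ M.ncard = n} :=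
    Nat.sSup_mem ⟨0, ∅, ⟨by simp, by simp⟩, by simp, by simp⟩ (muOnSet_bdd G B)
  exact h

lemma alphaOn_le_alpha : alphaOn G B ≤ alpha G := by
  obtain ⟨s, -, hs, hc⟩ := alphaOn_exists G B
  rw [← hc]
  exact le_alpha hs

lemma muOn_le_mu : muOn G B ≤ mu G := by
  obtain ⟨M, hM, -, hc⟩ := muOn_exists G B
  rw [← hc]
  exact le_mu hM

/-- α is additive over parts with no edges in between. -/
lemma alphaOn_union (hdisj : Disjoint B1 B2)
    (hsep : ∀ a ∈ B1, ∀ b ∈ B2, ¬ G.Adj a b) :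
    alphaOn G (B1 ∪ B2) = alphaOn G B1 + alphaOn G B2 := by
  apply le_antisymm
  · obtain ⟨s, hsB, hs, hc⟩ := alphaOn_exists G (B1 ∪ B2)
    rw [← hc]
    have hsplit : s = (s ∩ B1) ∪ (s ∩ B2) := by
      ext x
      constructor
      · intro hx
        rcases hsB hx with h | h
        · exact Or.inl ⟨hx, h⟩
        · exact Or.inr ⟨hx, h⟩
      · rintro (⟨h, -⟩ | ⟨h, -⟩) <;> exact h
    have hd : Disjoint (s ∩ B1) (s ∩ B2) :=
      Set.disjoint_of_subset (Set.inter_subset_right) (Set.inter_subset_right) hdisj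
    calc s.ncard = (s ∩ B1).ncard + (s ∩ B2).ncard := by
          nth_rewrite 1 [hsplit]
          exact Set.ncard_union_eq hd (Set.toFinite _) (Set.toFinite _)
      _ ≤ alphaOn G B1 + alphaOn G B2 :=
          Nat.add_le_add
            (le_alphaOn Set.inter_subset_right (hs.mono Set.inter_subset_left))
            (le_alphaOn Set.inter_subset_right (hs.mono Set.inter_subset_left))
  · obtain ⟨s1, hs1B, hs1, hc1⟩ := alphaOn_exists G B1
    obtain ⟨s2, hs2B, hs2, hc2⟩ := alphaOn_exists G B2
    have hd : Disjoint s1 s2 := Set.disjoint_of_subset hs1B hs2B hdisj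
    have hindep : IsIndepSet G (s1 ∪ s2) := by
      intro a ha b hb hne
      rcases ha with ha | ha <;> rcases hb with hb | hb
      · exact hs1 ha hb hne
      · exact hsep a (hs1B ha) b (hs2B hb)
      · intro hadj
        exact hsep b (hs1B hb) a (hs2B ha) hadj.symm
      · exact hs2 ha hb hne
    have hsub : s1 ∪ s2 ⊆ B1 ∪ B2 := Set.union_subset_union hs1B hs2B
    have hcard : (s1 ∪ s2).ncard = alphaOn G B1 + alphaOn G B2 := by
      rw [Set.ncard_union_eq hd (Set.toFinite _) (Set.toFinite _), hc1, hc2]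
    rw [← hcard]
    exact le_alphaOn hsub hindep
  
lemma muOn_union_le (hdisj : Disjoint B1 B2) : muOn G B1 + muOn G B2 ≤ mu G := by
  obtain ⟨M1, hM1, hM1B, hc1⟩ := muOn_exists G B1
  obtain ⟨M2, hM2, hM2B, hc2⟩ := muOn_exists G B2
  have hmatch : IsMatching G (M1 ∪ M2) := by
    constructor
    · exact Set.union_subset hM1.1 hM2.1
    · intro e he f hf hne x hx hxf
      rcases he with he | he <;> rcases hf with hf | hf
      · exact hM1.2 he hf hne x hx hxf
      · exact (hdisj.ne_of_mem (hM1B e he x hx) (hM2B f hf x hxf)) rfl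
      · exact (hdisj.ne_of_mem (hM1B f hf x hxf) (hM2B e he x hx)) rfl
      · exact hM2.2 he hf hne x hx hxf
  have hdisjM : Disjoint M1 M2 := by
    rw [Set.disjoint_left]
    intro e he1 he2
    have hx : e.out.1 ∈ e := e.out_fst_mem
    exact (hdisj.ne_of_mem (hM1B e he1 _ hx) (hM2B e he2 _ hx)) rfl
  have := le_mu hmatch
  rwa [Set.ncard_union_eq hdisjM (Set.toFinite _) (Set.toFinite _), hc1, hc2] at this

lemma alphaOn_eq_induce : alphaOn G B = alpha (SimpleGraph.induce B G) := by
  apply le_antisymm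
  · obtain ⟨s, hsB, hs, hc⟩ := alphaOn_exists G B
    rw [← hc]
    set t : Set ↥B := Subtype.val ⁻¹' s with htdef
    have himg : Subtype.val '' t = s := by
      rw [htdef, Subtype.image_preimage_coe, Set.inter_eq_self_of_subset_right hsB]
    have hcards : s.ncard = t.ncard := by
      rw [← himg, Set.ncard_image_of_injective t Subtype.coe_injective]
    have hindep : IsIndepSet (SimpleGraph.induce B G) t := by
      intro a ha b hb hne hadj
      exact hs ha hb (fun h => hne (Subtype.coe_injective h)) hadj
    rw [hcards]
    exact le_alpha hindep
  · obtain ⟨t, ht, hc⟩ := alpha_exists (SimpleGraph.induce B G)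
    rw [← hc]
    set s : Set V := Subtype.val '' t with hsdef
    have hcards : t.ncard = s.ncard := by
      rw [hsdef, Set.ncard_image_of_injective t Subtype.coe_injective]
    have hindep : IsIndepSet G s := by
      rintro x ⟨a, ha, rfl⟩ y ⟨b, hb, rfl⟩ hne hadj
      exact ht ha hb (fun h => hne (congrArg Subtype.val h)) hadj
    rw [hcards]
    exact le_alphaOn (by rintro x ⟨a, -, rfl⟩; exact a.2) hindep

lemma mu_induce_le_muOn : mu (SimpleGraph.induce B G) ≤ muOn G B := by
  obtain ⟨M', hM', hc⟩ := mu_exists (SimpleGraph.induce B G)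
  rw [← hc]
  set M : Set (Sym2 V) := Sym2.map Subtype.val '' M' with hMdef
  have hcards : M'.ncard = M.ncard := by
    rw [hMdef, Set.ncard_image_of_injective M' (Sym2.map.injective Subtype.coe_injective)]
  have hmatch : IsMatching G M := by
    constructor
    · rintro e ⟨e', he', rfl⟩
      have hadj := hM'.1 he'
      induction e' with
      | h a b =>
        rw [SimpleGraph.mem_edgeSet] at hadj
        rw [Sym2.map_pair_eq, SimpleGraph.mem_edgeSet]
        exact hadj
    · rintro e ⟨e', he', rfl⟩ f ⟨f', hf', rfl⟩ hne x hx hxf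
      have hne' : e' ≠ f' := fun h => hne (by rw [h])
      obtain ⟨a, ha, rfl⟩ := Sym2.mem_map.mp hx
      obtain ⟨b, hb, hba⟩ := Sym2.mem_map.mp hxf
      have : b = a := Subtype.coe_injective hba
      subst this
      exact hM'.2 he' hf' hne' b ha hb
  have hMB : ∀ e ∈ M, ∀ x ∈ e, x ∈ B := by
    rintro e ⟨e', he', rfl⟩ x hx
    obtain ⟨a, -, rfl⟩ := Sym2.mem_map.mp hx
    exact a.2
  rw [hcards]
  exact le_muOn hmatch hMB

lemma konig_on (hno : ∀ (u : ↥B) (p : (SimpleGraph.induce B G).Walk u u), ¬ Odd p.length) :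
    B.ncard ≤ alphaOn G B + muOn G B := by
  have h1 : Nat.card ↥B = B.ncard := Nat.card_coe_set_eq B
  have h2 := card_le_alpha_add_mu (SimpleGraph.induce B G) hno
  rw [h1, ← alphaOn_eq_induce] at h2
  exact h2.trans (Nat.add_le_add_left mu_induce_le_muOn _)

end OnSets

section Main
variable [Finite V] {G : SimpleGraph V} {v : V} {c : G.Walk v v}

/-- Edges leaving `D_y - y` stay inside `D_y`. -/
lemma sep_edge (huniq : UniqueOddCycle G c) {y : V} (hy : y ∈ cycleVerts c)
    {a : V} (ha : a ∈ Dset G c y \ {y}) {b : V} (hadj : G.Adj a b) :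
    b ∈ Dset G c y := by
  by_cases he : s(a, b) ∈ cycleEdges c
  · exfalso
    have haC : a ∈ cycleVerts c := SimpleGraph.Walk.fst_mem_support_of_mem_edges c he
    exact ha.2 (cycle_sep huniq haC hy ha.1)
  · have hadj' : (Gdel G c).Adj a b := by
      rw [Gdel, SimpleGraph.deleteEdges_adj]
      exact ⟨hadj, he⟩
    exact (hadj'.symm.reachable).trans ha.1

lemma sep_no_adj (huniq : UniqueOddCycle G c) {y : V} (hy : y ∈ cycleVerts c) :
    ∀ a ∈ (Dset G c y \ {y}), ∀ b ∈ (Dset G c y)ᶜ, ¬ G.Adj a b := by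
  intro a ha b hb hadj
  exact hb (sep_edge huniq hy ha hadj)

/-- Inside `D_y - y` the graphs `G` and `G - E(C)` agree. -/
lemma dgraphMinus_eq (huniq : UniqueOddCycle G c) {y : V} (hy : y ∈ cycleVerts c) :
    DgraphMinus G c y = SimpleGraph.induce (Dset G c y \ {y}) G := by
  ext a b
  constructor
  · intro hadj
    exact SimpleGraph.deleteEdges_le (G := G) (cycleEdges c) hadj
  · intro hadj
    have hadj' : G.Adj (a : V) b := hadj
    by_cases he : s((a : V), (b : V)) ∈ cycleEdges c
    · exfalso
      have haC : (a : V) ∈ cycleVerts c := SimpleGraph.Walk.fst_mem_support_of_mem_edges c he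
      exact a.2.2 (cycle_sep huniq haC hy a.2.1)
    · show (Gdel G c).Adj (a : V) b
      rw [Gdel, SimpleGraph.deleteEdges_adj]
      exact ⟨hadj', he⟩

/-- There is a cycle vertex outside `D_y`. -/
lemma exists_outside (huniq : UniqueOddCycle G c) {y : V} (hy : y ∈ cycleVerts c) :
    ∃ z ∈ cycleVerts c, z ∉ Dset G c y := by
  obtain ⟨w, hw⟩ := exists_edge_at huniq.1.2 hy
  have hadj : G.Adj y w := by
    have := c.edges_subset_edgeSet hw
    rwa [SimpleGraph.mem_edgeSet] at this
  refine ⟨w, SimpleGraph.Walk.snd_mem_support_of_mem_edges c hw, ?_⟩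
  intro hwA
  exact hadj.ne' (cycle_sep huniq (SimpleGraph.Walk.snd_mem_support_of_mem_edges c hw) hy hwA)

variable (huniq : UniqueOddCycle G c) (hKE : ¬ KonigEgervary G) {y : V}
  (hy : y ∈ cycleVerts c)

/-- Under ¬KE : `α(G) = α(D_y - y) + α(G - D_y)`. -/
lemma alpha_split (huniq : UniqueOddCycle G c) (hKE : ¬ KonigEgervary G)
    {y : V} (hy : y ∈ cycleVerts c) :
    alpha G = alphaOn G (Dset G c y \ {y}) + alphaOn G (Dset G c y)ᶜ := by
  set A := Dset G c y with hA
  set W := A \ {y} with hW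
  have hyA : y ∈ A := SimpleGraph.Reachable.refl y
  have hsplit : ({y}ᶜ : Set V) = W ∪ Aᶜ := by
    ext x
    simp only [Set.mem_compl_iff, Set.mem_singleton_iff, Set.mem_union, hW, Set.mem_diff]
    constructor
    · intro hx
      by_cases hxA : x ∈ A
      · exact Or.inl ⟨hxA, hx⟩
      · exact Or.inr hxA
    · rintro (⟨-, hx⟩ | hx)
      · exact hx
      · rintro rfl; exact hx hyA
  have hdisj : Disjoint W Aᶜ :=
    Set.disjoint_of_subset Set.diff_subset (le_refl _) disjoint_compl_right
  have hunion : alphaOn G ({y}ᶜ) = alphaOn G W + alphaOn G Aᶜ := by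
    rw [hsplit]
    exact alphaOn_union hdisj (sep_no_adj huniq hy)
  -- König on G - y
  have hkonig : ({y}ᶜ : Set V).ncard ≤ alphaOn G ({y}ᶜ) + muOn G ({y}ᶜ) :=
    konig_on (no_odd_walk_induce huniq hy (by simp))
  have hcompl : ({y}ᶜ : Set V).ncard + 1 = Nat.card V := by
    have := Set.ncard_add_ncard_compl ({y} : Set V) (Set.toFinite _) (Set.toFinite _)
    simp only [Set.ncard_singleton] at this
    omega
  have hKE' : alpha G + mu G + 1 ≤ Nat.card V := by
    have h1 := alpha_add_mu_le G
    have h2 : alpha G + mu G ≠ Nat.card V := hKE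
    omega
  have h3 : alphaOn G ({y}ᶜ) ≤ alpha G := alphaOn_le_alpha
  have h4 : muOn G ({y}ᶜ) ≤ mu G := muOn_le_mu
  omega

/-- (P1): every maximum independent set traces maximally on `D_y - y`. -/
lemma trace_card (huniq : UniqueOddCycle G c) (hKE : ¬ KonigEgervary G)
    {y : V} (hy : y ∈ cycleVerts c) {S : Set V} (hS : S ∈ Omega G) :
    (S ∩ (Dset G c y \ {y})).ncard = alphaOn G (Dset G c y \ {y}) := by
  classical
  set A := Dset G c y with hA
  set W := A \ {y} with hW
  have hyA : y ∈ A := SimpleGraph.Reachable.refl y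
  have hyW : y ∉ W := fun h => h.2 rfl
  have hyAc : y ∉ Aᶜ := fun h => h hyA
  have hWA : W ⊆ A := Set.diff_subset
  have hdisjW : Disjoint (S ∩ W) (S ∩ Aᶜ) :=
    Set.disjoint_of_subset Set.inter_subset_right Set.inter_subset_right
      (Set.disjoint_of_subset hWA (le_refl _) disjoint_compl_right)
  have halpha : alpha G = alphaOn G W + alphaOn G Aᶜ := alpha_split huniq hKE hy
  have hle : (S ∩ W).ncard ≤ alphaOn G W :=
    le_alphaOn Set.inter_subset_right (hS.1.mono Set.inter_subset_left)
  have hleR : (S ∩ Aᶜ).ncard ≤ alphaOn G Aᶜ :=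
    le_alphaOn Set.inter_subset_right (hS.1.mono Set.inter_subset_left)
  by_cases hyS : y ∈ S
  · -- S = insert y ((S ∩ W) ∪ (S ∩ Aᶜ))
    have hsplitS : S = insert y ((S ∩ W) ∪ (S ∩ Aᶜ)) := by
      ext x
      constructor
      · intro hx
        by_cases hxy : x = y
        · exact Or.inl hxy
        · by_cases hxA : x ∈ A
          · exact Or.inr (Or.inl ⟨hx, hxA, hxy⟩)
          · exact Or.inr (Or.inr ⟨hx, hxA⟩)
      · rintro (rfl | (⟨hx, -⟩ | ⟨hx, -⟩)) <;> first | exact hyS | exact hx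
    have hynotin : y ∉ (S ∩ W) ∪ (S ∩ Aᶜ) := by
      rintro (⟨-, h⟩ | ⟨-, h⟩)
      · exact hyW h
      · exact hyAc h
    have hcardS : S.ncard = (S ∩ W).ncard + (S ∩ Aᶜ).ncard + 1 := by
      nth_rewrite 1 [hsplitS]
      rw [Set.ncard_insert_of_notMem hynotin (Set.toFinite _),
        Set.ncard_union_eq hdisjW (Set.toFinite _) (Set.toFinite _)]
    by_cases hgood : (S ∩ W).ncard = alphaOn G W
    · exact hgood
    exfalso
    -- bad case : |S ∩ W| = αW - 1 and |S ∩ Aᶜ| = αR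
    have hScard : S.ncard = alpha G := hS.2
    have hbad1 : (S ∩ W).ncard + 1 = alphaOn G W := by omega
    have hbad2 : (S ∩ Aᶜ).ncard = alphaOn G Aᶜ := by omega
    -- (a) every maximum independent subset of W contains a neighbour of y
    have hstep_a : ∀ t : Set V, t ⊆ W → IsIndepSet G t → t.ncard = alphaOn G W →
        ∃ τ ∈ t, G.Adj y τ := by
      intro t htW htind htc
      by_contra hno
      push_neg at hno
      set T := insert y (t ∪ (S ∩ Aᶜ)) with hT
      have hdisjT : Disjoint t (S ∩ Aᶜ) :=
        Set.disjoint_of_subset (htW.trans hWA) Set.inter_subset_right disjoint_compl_right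
      have hyT : y ∉ t ∪ (S ∩ Aᶜ) := by
        rintro (h | ⟨-, h⟩)
        · exact hyW (htW h)
        · exact hyAc h
      have hTind : IsIndepSet G T := by
        intro a ha b hb hne hadj
        rcases ha with rfl | (ha | ha) <;> rcases hb with rfl | (hb | hb)
        · exact hne rfl
        · exact hno b hb hadj
        · exact hS.1 hyS hb.1 hne hadj
        · exact hno a ha hadj.symm
        · exact htind ha hb hne hadj
        · exact sep_no_adj huniq hy a (htW ha) b hb.2 hadj
        · exact hS.1 ha.1 hyS hne hadj
        · exact sep_no_adj huniq hy b (htW hb) a ha.2 hadj.symm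
        · exact hS.1 ha.1 hb.1 hne hadj
      have hTcard : T.ncard = alpha G + 1 := by
        rw [hT, Set.ncard_insert_of_notMem hyT (Set.toFinite _),
          Set.ncard_union_eq hdisjT (Set.toFinite _) (Set.toFinite _), htc, hbad2, halpha]
      have := le_alpha hTind
      omega
    -- (b) alphaOn G A ≤ alphaOn G W
    have hstep_b : alphaOn G A ≤ alphaOn G W := by
      obtain ⟨s, hsA, hsind, hsc⟩ := alphaOn_exists G A
      rw [← hsc]
      by_cases hys : y ∈ s
      · have hs'W : s \ {y} ⊆ W := Set.diff_subset_diff_left hsA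
        have hs'ind : IsIndepSet G (s \ {y}) := hsind.mono Set.diff_subset
        have hs'card : (s \ {y}).ncard = s.ncard - 1 :=
          Set.ncard_diff_singleton_of_mem hys
        have hle1 : (s \ {y}).ncard ≤ alphaOn G W := le_alphaOn hs'W hs'ind
        by_contra hgt
        push_neg at hgt
        have hcard_eq : (s \ {y}).ncard = alphaOn G W := by omega
        obtain ⟨τ, hτ, hadjτ⟩ := hstep_a _ hs'W hs'ind hcard_eq
        have hτs : τ ∈ s := hτ.1
        have hτy : y ≠ τ := fun h => hτ.2 (by rw [← h]; rfl)
        exact hsind hys hτs hτy hadjτ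
      · have : s ⊆ W := fun x hx => ⟨hsA hx, fun hxy => hys (hxy ▸ hx)⟩
        exact le_alphaOn this hsind
    -- (c) König on A
    obtain ⟨z, hzC, hzA⟩ := exists_outside huniq hy
    have hkA : A.ncard ≤ alphaOn G A + muOn G A :=
      konig_on (no_odd_walk_induce huniq hzC hzA)
    -- (d) König on Aᶜ
    have hkR : (Aᶜ : Set V).ncard ≤ alphaOn G Aᶜ + muOn G Aᶜ :=
      konig_on (no_odd_walk_induce huniq hy hyAc)
    -- (e) contradiction
    have hmuU : muOn G A + muOn G Aᶜ ≤ mu G := muOn_union_le disjoint_compl_right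
    have hncompl : A.ncard + (Aᶜ : Set V).ncard = Nat.card V :=
      Set.ncard_add_ncard_compl A (Set.toFinite _) (Set.toFinite _)
    have hKE' : alpha G + mu G + 1 ≤ Nat.card V := by
      have h1 := alpha_add_mu_le G
      have h2 : alpha G + mu G ≠ Nat.card V := hKE
      omega
    omega
  · -- y ∉ S : direct computation
    have hsplitS : S = (S ∩ W) ∪ (S ∩ Aᶜ) := by
      ext x
      constructor
      · intro hx
        by_cases hxA : x ∈ A
        · exact Or.inl ⟨hx, hxA, fun h => hyS (h ▸ hx)⟩
        · exact Or.inr ⟨hx, hxA⟩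
      · rintro (⟨hx, -⟩ | ⟨hx, -⟩) <;> exact hx
    have hcardS : S.ncard = (S ∩ W).ncard + (S ∩ Aᶜ).ncard := by
      nth_rewrite 1 [hsplitS]
      exact Set.ncard_union_eq hdisjW (Set.toFinite _) (Set.toFinite _)
    have hScard : S.ncard = alpha G := hS.2
    omega

/-- (P2): every maximum independent set of `D_y - y` extends to one of `G`. -/
lemma trace_extend (huniq : UniqueOddCycle G c) (hKE : ¬ KonigEgervary G)
    {y : V} (hy : y ∈ cycleVerts c) {t : Set V} (htW : t ⊆ Dset G c y \ {y})
    (htind : IsIndepSet G t) (htc : t.ncard = alphaOn G (Dset G c y \ {y})) :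
    ∃ S ∈ Omega G, S ∩ (Dset G c y \ {y}) = t := by
  set A := Dset G c y with hA
  set W := A \ {y} with hW
  obtain ⟨r, hrR, hrind, hrc⟩ := alphaOn_exists G Aᶜ
  have hdisj : Disjoint t r :=
    Set.disjoint_of_subset (htW.trans Set.diff_subset) hrR disjoint_compl_right
  have hindep : IsIndepSet G (t ∪ r) := by
    intro a ha b hb hne hadj
    rcases ha with ha | ha <;> rcases hb with hb | hb
    · exact htind ha hb hne hadj
    · exact sep_no_adj huniq hy a (htW ha) b (hrR hb) hadj
    · exact sep_no_adj huniq hy b (htW hb) a (hrR ha) hadj.symm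
    · exact hrind ha hb hne hadj
  have hcard : (t ∪ r).ncard = alpha G := by
    rw [Set.ncard_union_eq hdisj (Set.toFinite _) (Set.toFinite _), htc, hrc]
    exact (alpha_split huniq hKE hy).symm
  refine ⟨t ∪ r, ⟨hindep, hcard⟩, ?_⟩
  have h1 : t ∩ W = t := Set.inter_eq_self_of_subset_left htW
  have h2 : r ∩ W = ∅ := by
    rw [Set.eq_empty_iff_forall_notMem]
    rintro x ⟨hxr, hxW⟩
    exact (hrR hxr) hxW.1
  rw [Set.union_inter_distrib_right, h1, h2, Set.union_empty]

end Main

end AlmostBip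

/-- If `G` is an almost bipartite non-König-Egerváry graph with unique odd cycle `C`,
then for every `y ∈ V(C)` the trace of `Ω(G)` on `V(D_y - y)` equals `Ω(D_y - y)`. -/

theorem stmt_5 {V : Type*} [Fintype V] (G : SimpleGraph V) (v : V)
    (c : G.Walk v v) (huniq : UniqueOddCycle G c)
    (hKE : ¬ KonigEgervary G) :
    ∀ y ∈ cycleVerts c,
      {T : Set V | ∃ S ∈ Omega G, T = S ∩ (Dset G c y \ {y})} =
        {T : Set V | ∃ t ∈ Omega (DgraphMinus G c y), T = Subtype.val '' t} := by
  intro y hy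
  have heq : DgraphMinus G c y = SimpleGraph.induce (Dset G c y \ {y}) G :=
    dgraphMinus_eq huniq hy
  have halphaD : alpha (DgraphMinus G c y) = alphaOn G (Dset G c y \ {y}) := by
    rw [heq, ← alphaOn_eq_induce]
  ext T
  simp only [Set.mem_setOf_eq]
  constructor
  · rintro ⟨S, hS, rfl⟩
    have himg : Subtype.val '' (Subtype.val ⁻¹' (S ∩ (Dset G c y \ {y})) :
        Set ↥(Dset G c y \ {y})) = S ∩ (Dset G c y \ {y}) := by
      rw [Subtype.image_preimage_coe,
        Set.inter_eq_self_of_subset_right Set.inter_subset_right]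
    refine ⟨Subtype.val ⁻¹' (S ∩ (Dset G c y \ {y})), ⟨?_, ?_⟩, himg.symm⟩
    · intro a ha b hb hne hadj
      have hadj' : G.Adj (a : V) (b : V) :=
        SimpleGraph.deleteEdges_le (G := G) (cycleEdges c) hadj
      exact hS.1 (Set.mem_preimage.mp ha).1 (Set.mem_preimage.mp hb).1
        (fun h => hne (Subtype.coe_injective h)) hadj'
    · have h1 : (Subtype.val ⁻¹' (S ∩ (Dset G c y \ {y})) :
          Set ↥(Dset G c y \ {y})).ncard = (S ∩ (Dset G c y \ {y})).ncard := by
        conv_rhs => rw [← himg]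
        rw [Set.ncard_image_of_injective _ Subtype.coe_injective]
      rw [h1, halphaD]
      exact trace_card huniq hKE hy hS
  · rintro ⟨t, ⟨htind, htc⟩, rfl⟩
    have hsub : Subtype.val '' t ⊆ Dset G c y \ {y} := by
      rintro x ⟨a, -, rfl⟩; exact a.2
    have hindep : IsIndepSet G (Subtype.val '' t) := by
      rintro x ⟨a, ha, rfl⟩ x' ⟨b, hb, rfl⟩ hne hadj
      have hab : a ≠ b := fun h => hne (congrArg Subtype.val h)
      have hadj2 : (SimpleGraph.induce (Dset G c y \ {y}) G).Adj a b := hadj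
      rw [← heq] at hadj2
      exact htind ha hb hab hadj2
    have hncard : (Subtype.val '' t).ncard = alphaOn G (Dset G c y \ {y}) := by
      rw [Set.ncard_image_of_injective _ Subtype.coe_injective, htc, halphaD]
    obtain ⟨S, hS, hSW⟩ := trace_extend huniq hKE hy hsub hindep hncard
    exact ⟨S, hS, hSW.symm⟩
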